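/- Define x_{1,1} = 1, and given x_{1,k-1},...,x_{k-1,k-1}, set x_{i,k} = 3·x_{i,k-1} for i < k and x_{k,k} = 3u + 2 where u is chosen with 3u + 2 > 2·Σ_{i<k} x_{i,k-1}. Then for all nonnegative integers a_1,...,a_k: Σ_{i=1}^k a_i x_{i,k} = 2 Σ_{i=1}^k x_{i,k} implies a_i = 2 for all i. -/

import Mathlib

theorem stmt_11 (x : ℕ → ℕ → ℕ)
    (hbase : x 1 1 = 1)
    (hstep : ∀ k, 2 ≤ k → ∀ i, 1 ≤ i → i < k → x i k = 3 * x i (k - 1))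
    (hlast : ∀ k, 2 ≤ k → ∃ u : ℕ, x k k = 3 * u + 2 ∧
      3 * u + 2 > 2 * ∑ i ∈ Finset.Icc 1 (k - 1), x i (k - 1)) :
    ∀ k, 1 ≤ k → ∀ a : ℕ → ℕ,
      (∑ i ∈ Finset.Icc 1 k, a i * x i k) = 2 * ∑ i ∈ Finset.Icc 1 k, x i k →
      ∀ i ∈ Finset.Icc 1 k, a i = 2 := by
  intro k hk
  induction k, hk using Nat.le_induction with
  | base =>
    intro a h i hi
    simp only [Finset.Icc_self, Finset.mem_singleton] at hi
    subst hi
    simp only [Finset.Icc_self, Finset.sum_singleton, hbase] at h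
    omega
  | succ k hk ih =>
    intro a h i hi
    have hx : ∀ j ∈ Finset.Icc 1 k, x j (k+1) = 3 * x j k := by
      intro j hj
      simp only [Finset.mem_Icc] at hj
      simpa using hstep (k+1) (by omega) j hj.1 (by omega)
    obtain ⟨u, hu, hgt⟩ := hlast (k+1) (by omega)
    simp only [Nat.add_sub_cancel] at hgt
    have hT : ∑ j ∈ Finset.Icc 1 k, a j * x j (k+1)
        = 3 * ∑ j ∈ Finset.Icc 1 k, a j * x j k := by
      rw [Finset.mul_sum]
      exact Finset.sum_congr rfl (fun j hj => by rw [hx j hj]; ring)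
    have hS : ∑ j ∈ Finset.Icc 1 k, x j (k+1)
        = 3 * ∑ j ∈ Finset.Icc 1 k, x j k := by
      rw [Finset.mul_sum]
      exact Finset.sum_congr rfl (fun j hj => hx j hj)
    rw [Finset.sum_Icc_succ_top (by omega : 1 ≤ k+1),
        Finset.sum_Icc_succ_top (by omega : 1 ≤ k+1), hT, hS, hu] at h
    set T := ∑ j ∈ Finset.Icc 1 k, a j * x j k with hTdef
    set S := ∑ j ∈ Finset.Icc 1 k, x j k with hSdef
    have hexp : a (k+1) * (3*u+2) = 3*(a (k+1)*u) + 2 * a (k+1) := by ring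
    have ha : a (k+1) = 2 := by
      rcases Nat.lt_or_ge (a (k+1)) 5 with h5 | h5
      · omega
      · have hmu : 5*u ≤ a (k+1) * u := Nat.mul_le_mul_right u h5
        omega
    have hTS : T = 2 * S := by rw [ha] at h; omega
    simp only [Finset.mem_Icc] at hi
    rcases Nat.lt_or_ge i (k+1) with hik | hik
    · exact ih a hTS i (Finset.mem_Icc.mpr ⟨hi.1, by omega⟩)
    · have : i = k+1 := by omega
      rw [this]; exact ha
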